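/- Define the operator L := |e₁⟩⟨e₁| ⊗ |e₁⟩⟨e₁| + |e₁⟩⟨e₂| ⊗ |e₁⟩⟨e₂| on ℂ² ⊗ ℂ². Then L maps every vector to a scalar multiple of the separable vector e₁ ⊗ e₁, yet neither L nor S·L (S the swap operator) can be written as an elementary tensor P ⊗ Q of operators P, Q on ℂ², even allowing singular P, Q. -/

import Mathlib

noncomputable section

/-- The elementary tensor `a ⊗ b` in `ℂ² ⊗ ℂ² ≅ ℂ^(2×2)`. -/
def tens (a b : EuclideanSpace ℂ (Fin 2)) : EuclideanSpace ℂ (Fin 2 × Fin 2) :=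
  WithLp.toLp 2 (fun p : Fin 2 × Fin 2 => a p.1 * b p.2)

/-- The first standard basis vector `e₁` of `ℂ²`. -/
def e0 : EuclideanSpace ℂ (Fin 2) := EuclideanSpace.single 0 1

/-- The operator `L = |e₁⟩⟨e₁| ⊗ |e₁⟩⟨e₁| + |e₁⟩⟨e₂| ⊗ |e₁⟩⟨e₂|` on `ℂ² ⊗ ℂ²`,
which acts as `z ↦ (z₍₀,₀₎ + z₍₁,₁₎) • (e₁ ⊗ e₁)`. -/
def L19 : EuclideanSpace ℂ (Fin 2 × Fin 2) →ₗ[ℂ] EuclideanSpace ℂ (Fin 2 × Fin 2) where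
  toFun z := (z (0, 0) + z (1, 1)) • tens e0 e0
  map_add' x y := by
    simp only [PiLp.add_apply]
    module
  map_smul' c x := by
    simp only [PiLp.smul_apply, RingHom.id_apply, smul_eq_mul, smul_smul]
    ring_nf


def e1' : EuclideanSpace ℂ (Fin 2) := EuclideanSpace.single 1 1

lemma e0_0 : e0 0 = 1 := by simp [e0, EuclideanSpace.single_apply]
lemma e0_1 : e0 1 = 0 := by simp [e0, EuclideanSpace.single_apply]
lemma e1'_0 : e1' 0 = 0 := by simp [e1', EuclideanSpace.single_apply]
lemma e1'_1 : e1' 1 = 1 := by simp [e1', EuclideanSpace.single_apply]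

lemma L19_tens (a b : EuclideanSpace ℂ (Fin 2)) :
    L19 (tens a b) = (a 0 * b 0 + a 1 * b 1) • tens e0 e0 := rfl

lemma key (P Q : EuclideanSpace ℂ (Fin 2) →ₗ[ℂ] EuclideanSpace ℂ (Fin 2))
    (h : ∀ a b, tens (P a) (Q b) = (a 0 * b 0 + a 1 * b 1) • tens e0 e0) : False := by
  have ev : ∀ a b : EuclideanSpace ℂ (Fin 2),
      P a 0 * Q b 0 = a 0 * b 0 + a 1 * b 1 := by
    intro a b
    have := congrArg (fun v => v (0, 0)) (h a b)
    simpa [tens, e0_0] using this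
  have h00 := ev e0 e0
  have h11 := ev e1' e1'
  have h01 := ev e0 e1'
  rw [e0_0, e0_1] at h00
  rw [e1'_0, e1'_1] at h11
  rw [e0_0, e0_1, e1'_0, e1'_1] at h01
  have hP : P e0 0 ≠ 0 := by
    intro hz; rw [hz] at h00; simp at h00
  have hQ : Q e1' 0 ≠ 0 := by
    intro hz; rw [hz] at h11; simp at h11
  have : P e0 0 * Q e1' 0 = 0 := by rw [h01]; ring
  exact (mul_ne_zero hP hQ) this

/-- `L19` maps every vector to a scalar multiple of the separable vector `e₁ ⊗ e₁`, yet
neither `L19` nor `S·L19` (`S` the swap) is an elementary tensor `P ⊗ Q` of operators. -/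
theorem stmt19 (Sw : EuclideanSpace ℂ (Fin 2 × Fin 2) →ₗ[ℂ] EuclideanSpace ℂ (Fin 2 × Fin 2))
    (hSw : ∀ a b : EuclideanSpace ℂ (Fin 2), Sw (tens a b) = tens b a) :
    (∀ z : EuclideanSpace ℂ (Fin 2 × Fin 2), ∃ c : ℂ, L19 z = c • tens e0 e0) ∧
    (¬ ∃ P Q : EuclideanSpace ℂ (Fin 2) →ₗ[ℂ] EuclideanSpace ℂ (Fin 2),
      ∀ a b : EuclideanSpace ℂ (Fin 2), L19 (tens a b) = tens (P a) (Q b)) ∧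
    (¬ ∃ P Q : EuclideanSpace ℂ (Fin 2) →ₗ[ℂ] EuclideanSpace ℂ (Fin 2),
      ∀ a b : EuclideanSpace ℂ (Fin 2), Sw (L19 (tens a b)) = tens (P a) (Q b)) := by
  refine ⟨fun z => ⟨z (0,0) + z (1,1), rfl⟩, ?_, ?_⟩
  · rintro ⟨P, Q, h⟩
    exact key P Q fun a b => by rw [← h a b, L19_tens]
  · rintro ⟨P, Q, h⟩
    refine key P Q fun a b => ?_
    rw [← h a b, L19_tens, map_smul, hSw e0 e0]
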